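/- For every integer k ≥ 1: every finite connected graph of metric dimension at most k on n vertices has at most n(3^k − 1)/2 edges, and for every ε > 0 there exists a finite connected graph G of metric dimension at most k with at least (1 − ε)(3^k − 1)|V(G)|/2 edges. That is, the maximum number of edges in an n-vertex graph of metric dimension k is n(3^k − 1)(1 − o(1))/2. -/

import Mathlib

open SimpleGraph

/-- `S` is a resolving set for `G`: any two distinct vertices are distinguished
by their graph distance to some landmark in `S`. -/
def IsResolvingSet {V : Type*} (G : SimpleGraph V) (S : Set V) : Prop :=
  ∀ u v : V, u ≠ v → ∃ w ∈ S, G.dist u w ≠ G.dist v w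

/-- The metric dimension of `G`: the least size of a (finite) resolving set. -/
noncomputable def metricDim {V : Type*} (G : SimpleGraph V) : ℕ :=
  sInf {k | ∃ S : Finset V, IsResolvingSet G ↑S ∧ S.card = k}

/-- Distance from an edge `e = {u,v}` to a vertex `w`: `min (d(u,w)) (d(v,w))`. -/
noncomputable def edgeDist {V : Type*} (G : SimpleGraph V) (e : Sym2 V) (w : V) : ℕ :=
  Sym2.lift ⟨fun u v => min (G.dist u w) (G.dist v w), fun u v => by simp [min_comm]⟩ e

/-- `S` is an edge resolving set for `G`: any two distinct edges are distinguished
by their distance to some landmark in `S`. -/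
def IsEdgeResolvingSet {V : Type*} (G : SimpleGraph V) (S : Set V) : Prop :=
  ∀ e ∈ G.edgeSet, ∀ f ∈ G.edgeSet, e ≠ f → ∃ w ∈ S, edgeDist G e w ≠ edgeDist G f w

/-- The edge metric dimension of `G`: the least size of a (finite) edge resolving set. -/
noncomputable def edgeMetricDim {V : Type*} (G : SimpleGraph V) : ℕ :=
  sInf {k | ∃ S : Finset V, IsEdgeResolvingSet G ↑S ∧ S.card = k}

/-- `G` contains `H` as a subgraph: there is an injective graph homomorphism `H → G`. -/
def Contains {V W : Type*} (G : SimpleGraph V) (H : SimpleGraph W) : Prop :=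
  ∃ f : H →g G, Function.Injective f

/-- The graph `D_k` on `ℤ_{≥0}^k`: distinct points are adjacent iff they differ
by at most 1 in every coordinate. -/
def Dgraph (k : ℕ) : SimpleGraph (Fin k → ℕ) where
  Adj x y := x ≠ y ∧ ∀ i, x i ≤ y i + 1 ∧ y i ≤ x i + 1
  symm := ⟨fun _x _y h => ⟨h.1.symm, fun i => ⟨(h.2 i).2, (h.2 i).1⟩⟩⟩
  loopless := ⟨fun _x h => h.1 rfl⟩

section Part1
variable {V : Type} [Fintype V]

lemma degree_lt_of_resolving (G : SimpleGraph V) [DecidableRel G.Adj] (hc : G.Connected)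
    (S : Finset V) (hS : IsResolvingSet G ↑S) (u : V) :
    G.degree u < 3 ^ S.card := by
  classical
  -- code map
  have hdeg : G.degree u = Fintype.card (G.neighborSet u) :=
    (G.card_neighborSet_eq_degree u).symm
  rw [hdeg]
  have h3 : (3 : ℕ) ^ S.card = Fintype.card (↥S → Fin 3) := by
    simp
  rw [h3]
  set f : G.neighborSet u → (↥S → Fin 3) := fun v w =>
    ⟨G.dist v w + 1 - G.dist u w, by
      have h1 : G.dist (v : V) w ≤ G.dist u w + 1 := by
        have := hc.dist_triangle (u := (v : V)) (v := u) (w := w)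
        have hd1 : G.dist (v : V) u = 1 := by
          rw [SimpleGraph.dist_eq_one_iff_adj]
          exact (v.2 : G.Adj u v).symm
        omega
      omega⟩ with hf
  have hrec : ∀ (v : G.neighborSet u) (w : V) (hw : w ∈ S),
      G.dist (v : V) w + 1 = (f v ⟨w, hw⟩ : ℕ) + G.dist u w := by
    intro v w hw
    have h2 : G.dist u w ≤ G.dist (v : V) w + 1 := by
      have := hc.dist_triangle (u := u) (v := (v : V)) (w := w)
      have hd1 : G.dist u (v : V) = 1 := by
        rw [SimpleGraph.dist_eq_one_iff_adj]; exact (v.2 : G.Adj u v)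
      omega
    simp only [hf]
    omega
  have hinj : Function.Injective f := by
    intro v v' h
    by_contra hne
    have hne' : (v : V) ≠ (v' : V) := fun hh => hne (Subtype.ext hh)
    obtain ⟨w, hwS, hwd⟩ := hS v v' hne'
    apply hwd
    have h1 := hrec v w hwS
    have h2 := hrec v' w hwS
    have hfw : f v ⟨w, hwS⟩ = f v' ⟨w, hwS⟩ := congrFun h _
    rw [hfw] at h1
    omega
  apply Fintype.card_lt_of_injective_of_notMem f hinj (b := fun _ => (1 : Fin 3))
  rintro ⟨v, hv⟩
  have hvu : (v : V) ≠ u := (G.ne_of_adj (v.2 : G.Adj u (v : V))).symm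
  obtain ⟨w, hwS, hwd⟩ := hS v u hvu
  apply hwd
  have h1 := hrec v w hwS
  have h2 : f v ⟨w, hwS⟩ = 1 := congrFun hv _
  rw [h2] at h1
  simp only [Fin.val_one] at h1; omega

end Part1

lemma part1 (k : ℕ) (V : Type) [Fintype V] (G : SimpleGraph V) (hc : G.Connected)
    (hdim : metricDim G ≤ k) : 2 * G.edgeSet.ncard ≤ Fintype.card V * (3 ^ k - 1) := by
  classical
  have hne : {m | ∃ S : Finset V, IsResolvingSet G ↑S ∧ S.card = m}.Nonempty := by
    refine ⟨(Finset.univ : Finset V).card, Finset.univ, ?_, rfl⟩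
    intro u v huv
    exact ⟨v, by simp, by
      have : 0 < G.dist u v := hc.pos_dist_of_ne huv
      rw [SimpleGraph.dist_self]; omega⟩
  obtain ⟨S, hS, hcard⟩ := Nat.sInf_mem hne
  have hSk : S.card ≤ k := by rw [hcard]; exact hdim
  have hdeg : ∀ u : V, G.degree u ≤ 3 ^ k - 1 := by
    intro u
    have h1 := degree_lt_of_resolving G hc S hS u
    have h2 : (3:ℕ) ^ S.card ≤ 3 ^ k := Nat.pow_le_pow_right (by norm_num) hSk
    omega
  have hsum : ∑ v : V, G.degree v = 2 * G.edgeFinset.card :=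
    G.sum_degrees_eq_twice_card_edges
  have hEn : G.edgeSet.ncard = G.edgeFinset.card := by
    rw [← G.coe_edgeFinset, Set.ncard_coe_finset]
  rw [hEn, ← hsum]
  calc ∑ v : V, G.degree v ≤ ∑ _v : V, (3 ^ k - 1) := Finset.sum_le_sum fun v _ => hdeg v
    _ = Fintype.card V * (3 ^ k - 1) := by simp [Finset.sum_const, mul_comm]


/-- landmark point -/
def wpt (k s : ℕ) (j : Fin k) : Fin k → ℕ := fun i => if i = j then s + 1 else 0

def inA (s : ℕ) {k : ℕ} (x : Fin k → ℕ) : Prop :=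
  (∀ i, x i ≤ s) ∧ ∀ i j : Fin k, i ≠ j → x i + x j ≤ s + 1

def Vset (k s : ℕ) : Set (Fin k → ℕ) := {x | inA s x} ∪ Set.range (wpt k s)

lemma wpt_not_inA (k s : ℕ) (j : Fin k) : ¬ inA s (wpt k s j) := by
  intro h
  have := h.1 j
  simp [wpt] at this

lemma wpt_injective (k s : ℕ) : Function.Injective (wpt k s) := by
  intro a b h
  by_contra hab
  have := congrFun h a
  simp [wpt, hab] at this

lemma dist_le_add {α : Type*} {G : SimpleGraph α} {u v x : α}
    (h1 : G.Reachable u v) (h2 : G.Reachable v x) :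
    G.dist u x ≤ G.dist u v + G.dist v x := by
  obtain ⟨p, hp⟩ := h1.exists_walk_length_eq_dist
  obtain ⟨q, hq⟩ := h2.exists_walk_length_eq_dist
  have := SimpleGraph.dist_le (p.append q)
  rwa [Walk.length_append, hp, hq] at this

lemma chain_dist {α : Type*} (G : SimpleGraph α) (p : ℕ → α)
    (h : ∀ t, p t = p (t + 1) ∨ G.Adj (p t) (p (t + 1))) (T : ℕ) :
    G.Reachable (p 0) (p T) ∧ G.dist (p 0) (p T) ≤ T := by
  induction T with
  | zero => exact ⟨Reachable.refl _, by simp⟩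
  | succ T ih =>
    rcases h T with he | ha
    · exact ⟨he ▸ ih.1, le_trans (he ▸ ih.2) (by omega)⟩
    · refine ⟨ih.1.trans ha.reachable, ?_⟩
      have h1 : G.dist (p T) (p (T + 1)) = 1 := by
        rw [SimpleGraph.dist_eq_one_iff_adj]; exact ha
      have := dist_le_add ih.1 ha.reachable
      omega

/-- along a walk in any induced subgraph of `Dgraph k`, coordinates change by
at most the length -/
lemma coord_bound {k s : ℕ} {u v : ↥(Vset k s)} (p : ((Dgraph k).induce (Vset k s)).Walk u v)
    (i : Fin k) : (u : Fin k → ℕ) i ≤ (v : Fin k → ℕ) i + p.length ∧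
      (v : Fin k → ℕ) i ≤ (u : Fin k → ℕ) i + p.length := by
  induction p with
  | nil => simp
  | @cons a b c h q ih =>
    have h' : (Dgraph k).Adj (a : Fin k → ℕ) (b : Fin k → ℕ) := h
    have hb := (And.right h') i
    rw [Walk.length_cons]
    omega

/-- the explicit path from a body point `x` towards landmark `j` -/
def pathp (s : ℕ) {k : ℕ} (x : Fin k → ℕ) (j : Fin k) (t : ℕ) : Fin k → ℕ :=
  fun i => if i = j then min (x j + t) (s + 1) else x i - t

lemma pathp_mem {k s : ℕ} {x : Fin k → ℕ} (hx : inA s x) (j : Fin k) (t : ℕ) :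
    pathp s x j t ∈ Vset k s := by
  by_cases h : x j + t ≤ s
  · left
    constructor
    · intro i
      simp only [pathp]
      split_ifs with hij
      · omega
      · have := hx.1 i; omega
    · intro a b hab
      have h1 := hx.1 a
      have h2 := hx.1 b
      have h3 := hx.2 a b hab
      simp only [pathp]
      split_ifs with ha hb hb
      · exact absurd (ha.trans hb.symm) hab
      · subst ha; omega
      · subst hb; omega
      · omega
  · right
    refine ⟨j, ?_⟩
    funext i
    simp only [pathp, wpt]
    split_ifs with hij
    · omega
    · have h3 := hx.2 i j hij
      have h1 := hx.1 j
      omega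

lemma pathp_step {k s : ℕ} (x : Fin k → ℕ) (j : Fin k) (t : ℕ) :
    pathp s x j t = pathp s x j (t + 1) ∨
      (Dgraph k).Adj (pathp s x j t) (pathp s x j (t + 1)) := by
  by_cases he : pathp s x j t = pathp s x j (t + 1)
  · exact Or.inl he
  · refine Or.inr (And.intro he fun i => ?_)
    simp only [pathp]
    split_ifs <;> omega

lemma pathp_zero {k s : ℕ} {x : Fin k → ℕ} (hx : inA s x) (j : Fin k) :
    pathp s x j 0 = x := by
  funext i
  have := hx.1 j
  simp only [pathp]
  split_ifs with hij
  · subst hij; omega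
  · omega

lemma pathp_last {k s : ℕ} {x : Fin k → ℕ} (hx : inA s x) (j : Fin k) :
    pathp s x j (s + 1 - x j) = wpt k s j := by
  funext i
  have h1 := hx.1 j
  simp only [pathp, wpt]
  split_ifs with hij
  · subst hij; omega
  · have := hx.2 i j hij
    omega

abbrev Gks (k s : ℕ) : SimpleGraph ↥(Vset k s) := (Dgraph k).induce (Vset k s)

lemma reach_w {k s : ℕ} {x : Fin k → ℕ} (hx : inA s x) (j : Fin k) :
    (Gks k s).Reachable ⟨x, Or.inl hx⟩ ⟨wpt k s j, Or.inr ⟨j, rfl⟩⟩ ∧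
      (Gks k s).dist ⟨x, Or.inl hx⟩ ⟨wpt k s j, Or.inr ⟨j, rfl⟩⟩ = s + 1 - x j := by
  set P : ℕ → ↥(Vset k s) := fun t => ⟨pathp s x j t, pathp_mem hx j t⟩ with hP
  have hstep : ∀ t, P t = P (t + 1) ∨ (Gks k s).Adj (P t) (P (t + 1)) := by
    intro t
    rcases pathp_step (s := s) x j t with he | ha
    · exact Or.inl (Subtype.ext he)
    · exact Or.inr ha
  have h0 : P 0 = ⟨x, Or.inl hx⟩ := Subtype.ext (pathp_zero hx j)
  have hT : P (s + 1 - x j) = ⟨wpt k s j, Or.inr ⟨j, rfl⟩⟩ := Subtype.ext (pathp_last hx j)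
  obtain ⟨hr, hd⟩ := chain_dist (Gks k s) P hstep (s + 1 - x j)
  rw [h0, hT] at hr hd
  refine ⟨hr, le_antisymm hd ?_⟩
  obtain ⟨p, hp⟩ := hr.exists_walk_length_eq_dist
  have hc := (coord_bound p j).2
  have hc2 : s + 1 ≤ x j + p.length := by simpa [wpt] using hc
  have := hx.1 j
  omega

lemma zero_inA (k s : ℕ) : inA s (fun _ : Fin k => 0) := by
  constructor
  · intro i; exact Nat.zero_le _
  · intro a b _; simp

lemma reach_any_w {k s : ℕ} (hk : 1 ≤ k) (u : ↥(Vset k s)) (j : Fin k) :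
    (Gks k s).Reachable u ⟨wpt k s j, Or.inr ⟨j, rfl⟩⟩ := by
  rcases u.2 with hA | ⟨j', hj'⟩
  · have := (reach_w hA j).1
    have hu : u = ⟨(u : Fin k → ℕ), Or.inl hA⟩ := Subtype.ext rfl
    rwa [← hu] at this
  · have h1 := (reach_w (zero_inA k s) j').1
    have h2 := (reach_w (zero_inA k s) j).1
    have hu : u = ⟨wpt k s j', Or.inr ⟨j', rfl⟩⟩ := Subtype.ext hj'.symm
    rw [hu]
    exact h1.symm.trans h2

lemma Gks_connected {k s : ℕ} (hk : 1 ≤ k) : (Gks k s).Connected := by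
  have j0 : Fin k := ⟨0, hk⟩
  rw [SimpleGraph.connected_iff]
  refine ⟨fun u v => ?_, ⟨⟨wpt k s j0, Or.inr ⟨j0, rfl⟩⟩⟩⟩
  exact (reach_any_w hk u j0).trans (reach_any_w hk v j0).symm

def wv {k s : ℕ} (j : Fin k) : ↥(Vset k s) := ⟨wpt k s j, Or.inr ⟨j, rfl⟩⟩

noncomputable def Sres (k s : ℕ) : Finset ↥(Vset k s) :=
  Finset.image (fun j => wv j) Finset.univ

lemma dist_w {k s : ℕ} (u : ↥(Vset k s)) (hA : inA s (u : Fin k → ℕ)) (j : Fin k) :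
    (Gks k s).dist u (wv j) = s + 1 - (u : Fin k → ℕ) j := by
  have hu : u = ⟨(u : Fin k → ℕ), Or.inl hA⟩ := Subtype.ext rfl
  rw [hu]
  exact (reach_w hA j).2

lemma Sres_resolving {k s : ℕ} (hk : 1 ≤ k) : IsResolvingSet (Gks k s) ↑(Sres k s) := by
  intro u v huv
  have hmem : ∀ j : Fin k, (wv j : ↥(Vset k s)) ∈ (↑(Sres k s) : Set ↥(Vset k s)) := by
    intro j; simp [Sres]
  rcases u.2 with hAu | ⟨ju, hju⟩ <;> rcases v.2 with hAv | ⟨jv, hjv⟩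
  · -- both body points
    have hne : (u : Fin k → ℕ) ≠ (v : Fin k → ℕ) := fun h => huv (Subtype.ext h)
    obtain ⟨j, hj⟩ := Function.ne_iff.mp hne
    refine ⟨wv j, hmem j, ?_⟩
    rw [dist_w u hAu j, dist_w v hAv j]
    have h1 := hAu.1 j
    have h2 := hAv.1 j
    omega
  · -- u body, v landmark jv
    refine ⟨wv jv, hmem jv, ?_⟩
    rw [dist_w u hAu jv]
    have hv : v = wv jv := Subtype.ext hjv.symm
    rw [hv, SimpleGraph.dist_self]
    have := hAu.1 jv
    omega
  · -- u landmark, v body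
    refine ⟨wv ju, hmem ju, ?_⟩
    rw [dist_w v hAv ju]
    have hu : u = wv ju := Subtype.ext hju.symm
    rw [hu, SimpleGraph.dist_self]
    have := hAv.1 ju
    omega
  · -- both landmarks
    refine ⟨wv ju, hmem ju, ?_⟩
    have hu : u = wv ju := Subtype.ext hju.symm
    rw [hu, SimpleGraph.dist_self]
    have hvne : v ≠ wv ju := by rw [← hu]; exact (Ne.symm huv)
    have hr : (Gks k s).Reachable v (wv ju) := reach_any_w hk v ju
    have := hr.pos_dist_of_ne hvne
    omega

lemma metricDim_le {k s : ℕ} (hk : 1 ≤ k) : metricDim (Gks k s) ≤ k := by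
  apply Nat.sInf_le
  refine ⟨Sres k s, Sres_resolving hk, ?_⟩
  rw [Sres, Finset.card_image_of_injective _ ?_, Finset.card_univ, Fintype.card_fin]
  intro a b h
  exact wpt_injective k s (congrArg Subtype.val h)

lemma Vset_finite (k s : ℕ) : (Vset k s).Finite := by
  apply Set.Finite.subset (Set.Finite.pi (fun _ : Fin k => Set.finite_Iic (s + 1)))
  rintro x (hA | ⟨j, rfl⟩)
  · intro i _
    exact le_trans (hA.1 i) (by omega)
  · intro i _
    simp only [wpt]
    split_ifs <;> simp

def inI (s : ℕ) {k : ℕ} (x : Fin k → ℕ) : Prop :=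
  (∀ i, 1 ≤ x i ∧ x i ≤ s - 1) ∧ ∀ i j : Fin k, i ≠ j → x i + x j ≤ s - 1

lemma inI_inA {k s : ℕ} {x : Fin k → ℕ} (hs : 2 ≤ s) (hx : inI s x) : inA s x :=
  ⟨fun i => by have := (hx.1 i).2; omega,
   fun i j hij => by have := hx.2 i j hij; omega⟩

lemma deg_ge {k s : ℕ} [Fintype ↥(Vset k s)] [DecidableRel (Gks k s).Adj]
    {x : Fin k → ℕ} (hs : 2 ≤ s) (hxI : inI s x) (hxA : x ∈ Vset k s) :
    3 ^ k - 1 ≤ (Gks k s).degree ⟨x, hxA⟩ := by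
  classical
  rw [← SimpleGraph.card_neighborSet_eq_degree]
  have hcard : Fintype.card {δ : Fin k → Fin 3 // δ ≠ fun _ => 1} = 3 ^ k - 1 := by
    rw [Fintype.card_subtype_compl, Fintype.card_subtype_eq]
    simp
  rw [← hcard]
  have hy : ∀ δ : Fin k → Fin 3, (fun i => x i + (δ i : ℕ) - 1) ∈ Vset k s := by
    intro δ
    left
    refine ⟨fun i => ?_, fun i j hij => ?_⟩
    · show x i + (δ i : ℕ) - 1 ≤ s
      have h1 := (hxI.1 i)
      have h2 : (δ i : ℕ) ≤ 2 := by omega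
      omega
    · show (x i + (δ i : ℕ) - 1) + (x j + (δ j : ℕ) - 1) ≤ s + 1
      have h1 := hxI.2 i j hij
      have h2 : (δ i : ℕ) ≤ 2 := by omega
      have h3 : (δ j : ℕ) ≤ 2 := by omega
      have h4 := (hxI.1 i).1
      have h5 := (hxI.1 j).1
      omega
  set f : {δ : Fin k → Fin 3 // δ ≠ fun _ => 1} → ((Gks k s).neighborSet ⟨x, hxA⟩) :=
    fun δ => ⟨⟨fun i => x i + (δ.1 i : ℕ) - 1, hy δ.1⟩, by
      have hne : (fun i => x i + (δ.1 i : ℕ) - 1) ≠ x := by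
        obtain ⟨i, hi⟩ := Function.ne_iff.mp δ.2
        intro hcon
        have := congrFun hcon i
        have h1 := (hxI.1 i).1
        have h2 : (δ.1 i : ℕ) ≤ 2 := by omega
        have h3 : (δ.1 i : ℕ) ≠ 1 := fun hh => hi (Fin.ext hh)
        omega
      refine (And.intro hne.symm fun i => ?_ : (Dgraph k).Adj x _)
      have h1 := (hxI.1 i).1
      have h2 : (δ.1 i : ℕ) ≤ 2 := by omega
      constructor <;> omega⟩ with hf
  apply Fintype.card_le_of_injective f
  intro δ δ' h
  apply Subtype.ext
  funext i
  have hval : (fun i => x i + (δ.1 i : ℕ) - 1) = (fun i => x i + (δ'.1 i : ℕ) - 1) :=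
    congrArg (Subtype.val ∘ Subtype.val) h
  have := congrFun hval i
  have h1 := (hxI.1 i).1
  apply Fin.ext
  omega

def BadCond (s : ℕ) {k : ℕ} (x : Fin k → ℕ) (p : Fin k × Fin k × Fin 4) : Prop :=
  ((p.2.2 : ℕ) = 0 ∧ x p.1 = 0) ∨ ((p.2.2 : ℕ) = 1 ∧ x p.1 = s) ∨
  ((p.2.2 : ℕ) = 2 ∧ p.2.1 ≠ p.1 ∧ x p.1 + x p.2.1 = s) ∨
  ((p.2.2 : ℕ) = 3 ∧ p.2.1 ≠ p.1 ∧ x p.1 + x p.2.1 = s + 1)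

abbrev Ttype (k s : ℕ) : Type :=
  Fin k ⊕ (Σ i : Fin k, Fin k × Fin 4 × ({j : Fin k // j ≠ i} → Fin (s + 1)))

lemma card_Ttype (k s : ℕ) (hk : 1 ≤ k) :
    Fintype.card (Ttype k s) = k + 4 * k ^ 2 * (s + 1) ^ (k - 1) := by
  have h1 : ∀ i : Fin k, Fintype.card {j : Fin k // j ≠ i} = k - 1 := by
    intro i
    rw [Fintype.card_subtype_compl, Fintype.card_subtype_eq]
    simp
  have h2 : ∀ i : Fin k, Fintype.card ({j : Fin k // j ≠ i} → Fin (s + 1))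
      = (s + 1) ^ (k - 1) := by
    intro i
    rw [Fintype.card_fun, h1 i, Fintype.card_fin]
  simp only [Ttype, Fintype.card_sum, Fintype.card_sigma, Fintype.card_prod, h2,
    Fintype.card_fin, Finset.sum_const, Finset.card_univ, Fintype.card_fin, smul_eq_mul]
  ring

lemma exists_badcond {k s : ℕ} (hs : 2 ≤ s) {x : Fin k → ℕ} (hA : inA s x)
    (hnI : ¬ inI s x) : ∃ p : Fin k × Fin k × Fin 4, BadCond s x p := by
  rw [inI, not_and_or] at hnI
  rcases hnI with h | h
  · push_neg at h
    obtain ⟨i, hi⟩ := h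
    have hxi := hA.1 i
    by_cases h0 : x i = 0
    · exact ⟨(i, i, 0), Or.inl ⟨rfl, h0⟩⟩
    · have hxs : x i = s := by omega
      exact ⟨(i, i, 1), Or.inr (Or.inl ⟨rfl, hxs⟩)⟩
  · push_neg at h
    obtain ⟨i, j, hij, hgt⟩ := h
    have h1 := hA.2 i j hij
    by_cases hc : x i + x j = s
    · exact ⟨(i, j, 2), Or.inr (Or.inr (Or.inl ⟨rfl, Ne.symm hij, hc⟩))⟩
    · by_cases hc2 : x i + x j = s + 1
      · exact ⟨(i, j, 3), Or.inr (Or.inr (Or.inr ⟨rfl, Ne.symm hij, hc2⟩))⟩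
      · exfalso
        have h2 := (hA.1 i)
        omega

open Classical in
noncomputable def Phi (k s : ℕ) (hk : 1 ≤ k) (v : ↥(Vset k s)) : Ttype k s :=
  if h : ∃ j, (v : Fin k → ℕ) = wpt k s j then Sum.inl h.choose
  else if h2 : ∃ p : Fin k × Fin k × Fin 4, BadCond s (v : Fin k → ℕ) p then
    Sum.inr ⟨h2.choose.1, h2.choose.2.1, h2.choose.2.2,
      fun j => ⟨min ((v : Fin k → ℕ) j.1) s, by omega⟩⟩
  else Sum.inl ⟨0, hk⟩

lemma not_landmark_inA {k s : ℕ} (v : ↥(Vset k s)) (h1 : ¬ ∃ j, (v : Fin k → ℕ) = wpt k s j) :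
    inA s (v : Fin k → ℕ) :=
  v.2.resolve_right (fun ⟨j, hj⟩ => h1 ⟨j, hj.symm⟩)

lemma Phi_inj {k s : ℕ} (hk : 1 ≤ k) (hs : 2 ≤ s) {v v' : ↥(Vset k s)}
    (hv : ¬ inI s (v : Fin k → ℕ)) (hv' : ¬ inI s (v' : Fin k → ℕ))
    (h : Phi k s hk v = Phi k s hk v') : v = v' := by
  by_cases h1 : ∃ j, (v : Fin k → ℕ) = wpt k s j <;>
    by_cases h1' : ∃ j, (v' : Fin k → ℕ) = wpt k s j
  · rw [Phi, dif_pos h1, Phi, dif_pos h1'] at h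
    simp only [Sum.inl.injEq] at h
    apply Subtype.ext
    rw [h1.choose_spec, h1'.choose_spec, h]
  · have hA' := not_landmark_inA v' h1'
    have h2' := exists_badcond hs hA' hv'
    rw [Phi, dif_pos h1, Phi, dif_neg h1', dif_pos h2'] at h
    exact absurd h (by simp)
  · have hA := not_landmark_inA v h1
    have h2 := exists_badcond hs hA hv
    rw [Phi, dif_neg h1, dif_pos h2, Phi, dif_pos h1'] at h
    exact absurd h (by simp)
  · have hA := not_landmark_inA v h1
    have hA' := not_landmark_inA v' h1'
    have h2 := exists_badcond hs hA hv
    have h2' := exists_badcond hs hA' hv'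
    rw [Phi, dif_neg h1, dif_pos h2, Phi, dif_neg h1', dif_pos h2'] at h
    have hbc := h2.choose_spec
    have hbc' := h2'.choose_spec
    have hsig := Sum.inr_injective h
    have hi : h2.choose.1 = h2'.choose.1 := congrArg Sigma.fst hsig
    have hjq : h2.choose.2.1 = h2'.choose.2.1 :=
      congrArg (fun q : (Σ i : Fin k, Fin k × Fin 4 × ({j : Fin k // j ≠ i} → Fin (s + 1))) =>
        q.2.1) hsig
    have hcq : (h2.choose.2.2 : ℕ) = (h2'.choose.2.2 : ℕ) :=
      congrArg (fun q : (Σ i : Fin k, Fin k × Fin 4 × ({j : Fin k // j ≠ i} → Fin (s + 1))) =>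
        (q.2.2.1 : ℕ)) hsig
    have hfun := congrArg
      (fun q : (Σ i : Fin k, Fin k × Fin 4 × ({j : Fin k // j ≠ i} → Fin (s + 1))) =>
        (fun j'' : Fin k => if hj : j'' = q.1 then (0 : ℕ) else (q.2.2.2 ⟨j'', hj⟩ : ℕ))) hsig
    have hoff : ∀ j'' : Fin k, j'' ≠ h2.choose.1 →
        (v : Fin k → ℕ) j'' = (v' : Fin k → ℕ) j'' := by
      intro j'' hne
      have h1 := congrFun hfun j''
      beta_reduce at h1
      rw [dif_neg hne, dif_neg (show j'' ≠ h2'.choose.1 from hi ▸ hne)] at h1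
      simp only at h1
      have hb1 := hA.1 j''
      have hb2 := hA'.1 j''
      omega
    have hbc := h2.choose_spec
    have hbc' := h2'.choose_spec
    have hcoord : (v : Fin k → ℕ) h2.choose.1 = (v' : Fin k → ℕ) h2.choose.1 := by
      rcases hbc with ⟨hc0, he⟩ | ⟨hc0, he⟩ | ⟨hc0, hne, he⟩ | ⟨hc0, hne, he⟩ <;>
        rcases hbc' with ⟨hc0', he'⟩ | ⟨hc0', he'⟩ | ⟨hc0', hne', he'⟩ | ⟨hc0', hne', he'⟩ <;>
        rw [← hi] at he' <;>
        first
          | omega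
          | (have hjj := hoff h2.choose.2.1 hne
             rw [← hjq] at he'
             omega)
    apply Subtype.ext
    funext j''
    by_cases hji : j'' = h2.choose.1
    · rw [hji]; exact hcoord
    · exact hoff j'' hji

lemma bad_card {k s : ℕ} (hk : 1 ≤ k) (hs : 2 ≤ s) [Fintype ↥(Vset k s)]
    [DecidablePred (fun v : ↥(Vset k s) => inI s (v : Fin k → ℕ))] :
    (Finset.univ.filter (fun v : ↥(Vset k s) => ¬ inI s (v : Fin k → ℕ))).card
      ≤ k + 4 * k ^ 2 * (s + 1) ^ (k - 1) := by
  classical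
  rw [← card_Ttype k s hk, ← Finset.card_univ]
  apply Finset.card_le_card_of_injOn (Phi k s hk) (fun v _ => Finset.mem_univ _)
  intro v hv v' hv' h
  simp only [Finset.coe_filter, Set.mem_setOf_eq] at hv hv'
  exact Phi_inj hk hs hv.2 hv'.2 h

lemma card_ge {k t : ℕ} [Fintype ↥(Vset k (2 * t))] :
    (t + 1) ^ k ≤ Fintype.card ↥(Vset k (2 * t)) := by
  have h : (t + 1) ^ k = Fintype.card (Fin k → Fin (t + 1)) := by
    rw [Fintype.card_fun, Fintype.card_fin, Fintype.card_fin]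
  rw [h]
  apply Fintype.card_le_of_injective
    (fun x => (⟨fun i => (x i : ℕ), Or.inl ⟨fun i => by show (x i : ℕ) ≤ 2 * t; have := (x i).is_le; omega,
      fun i j _ => by show (x i : ℕ) + (x j : ℕ) ≤ 2 * t + 1; have := (x i).is_le; have := (x j).is_le; omega⟩⟩ : ↥(Vset k (2 * t))))
  intro x y h
  funext i
  have := congrFun (congrArg Subtype.val h) i
  exact Fin.ext this

lemma arith1 (k t : ℕ) (hk : 1 ≤ k) :
    k + 4 * k ^ 2 * (2 * t + 1) ^ (k - 1) ≤ 2 ^ (k + 2) * k ^ 2 * (t + 1) ^ (k - 1) := by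
  have hpow : (2 * t + 1) ^ (k - 1) ≤ (2 * (t + 1)) ^ (k - 1) :=
    Nat.pow_le_pow_left (by omega) _
  rw [mul_pow] at hpow
  have hu : 1 ≤ (t + 1) ^ (k - 1) := Nat.one_le_pow _ _ (by omega)
  have h2 : (2 : ℕ) ^ (k + 2) = 8 * 2 ^ (k - 1) := by
    have hke : k + 2 = (k - 1) + 3 := by omega
    rw [hke, pow_add]; ring
  have hv : 1 ≤ 2 ^ (k - 1) * (t + 1) ^ (k - 1) :=
    Nat.one_le_iff_ne_zero.mpr (by positivity)
  rw [h2]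
  nlinarith [Nat.mul_le_mul_left (4 * k ^ 2) hpow, hk, hv, Nat.mul_le_mul hk hk]

lemma edge_bound {k s : ℕ} (hs : 2 ≤ s) [Fintype ↥(Vset k s)] [DecidableRel (Gks k s).Adj]
    [DecidableEq ↥(Vset k s)]
    [DecidablePred (fun v : ↥(Vset k s) => inI s (v : Fin k → ℕ))] :
    (Finset.univ.filter (fun v : ↥(Vset k s) => inI s (v : Fin k → ℕ))).card * (3 ^ k - 1)
      ≤ 2 * (Gks k s).edgeFinset.card := by
  rw [← SimpleGraph.sum_degrees_eq_twice_card_edges]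
  calc (Finset.univ.filter (fun v : ↥(Vset k s) => inI s (v : Fin k → ℕ))).card * (3 ^ k - 1)
      = ∑ _v ∈ Finset.univ.filter (fun v : ↥(Vset k s) => inI s (v : Fin k → ℕ)), (3 ^ k - 1) := by
        rw [Finset.sum_const, smul_eq_mul]
    _ ≤ ∑ v ∈ Finset.univ.filter (fun v : ↥(Vset k s) => inI s (v : Fin k → ℕ)),
          (Gks k s).degree v := by
        apply Finset.sum_le_sum
        intro v hv
        have hvI : inI s (v : Fin k → ℕ) := by simpa using hv
        have := deg_ge (k := k) hs hvI v.2
        simpa using this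
    _ ≤ ∑ v, (Gks k s).degree v := Finset.sum_le_sum_of_subset (Finset.filter_subset _ _)

lemma part2 (k : ℕ) (hk : 1 ≤ k) (ε : ℝ) (hε : 0 < ε) :
    ∃ (V : Type) (_ : Fintype V) (G : SimpleGraph V),
      G.Connected ∧ metricDim G ≤ k ∧
      (1 - ε) * ((3 : ℝ) ^ k - 1) * (Fintype.card V : ℝ) / 2 ≤ (G.edgeSet.ncard : ℝ) := by
  classical
  set X : ℝ := 2 ^ (k + 2) * k ^ 2 with hX
  have hX0 : 0 < X := by positivity
  set t : ℕ := max 1 ⌈X / ε⌉₊ with ht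
  set s : ℕ := 2 * t with hsdef
  have hs : 2 ≤ s := by
    have : 1 ≤ t := le_max_left _ _
    omega
  letI F : Fintype ↥(Vset k s) := (Vset_finite k s).fintype
  refine ⟨↥(Vset k s), F, Gks k s, Gks_connected hk, metricDim_le hk, ?_⟩
  set n : ℕ := Fintype.card ↥(Vset k s) with hn
  set m : ℕ := (Finset.univ.filter (fun v : ↥(Vset k s) => inI s (v : Fin k → ℕ))).card with hm
  set b : ℕ := (Finset.univ.filter (fun v : ↥(Vset k s) => ¬ inI s (v : Fin k → ℕ))).card with hb
  have h1 : m + b = n := by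
    rw [hm, hb, hn, ← Finset.card_univ]
    exact Finset.card_filter_add_card_filter_not _
  have h2 : b ≤ k + 4 * k ^ 2 * (s + 1) ^ (k - 1) := bad_card hk hs
  have h3 : (t + 1) ^ k ≤ n := card_ge
  have h4 : m * (3 ^ k - 1) ≤ 2 * (Gks k s).edgeFinset.card := edge_bound hs
  have hncard : (Gks k s).edgeSet.ncard = (Gks k s).edgeFinset.card := by
    rw [← SimpleGraph.coe_edgeFinset, Set.ncard_coe_finset]
  -- real arithmetic
  have harith : (k : ℝ) + 4 * k ^ 2 * (s + 1) ^ (k - 1) ≤ X * (t + 1) ^ (k - 1) := by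
    have := arith1 k t hk
    have hcast : ((k + 4 * k ^ 2 * (2 * t + 1) ^ (k - 1) : ℕ) : ℝ)
        ≤ ((2 ^ (k + 2) * k ^ 2 * (t + 1) ^ (k - 1) : ℕ) : ℝ) := Nat.cast_le.mpr this
    push_cast at hcast
    rw [hsdef]
    push_cast
    convert hcast using 2 <;> norm_num
  have hXt : X ≤ ε * (t + 1) := by
    have hceil : X / ε ≤ (⌈X / ε⌉₊ : ℝ) := Nat.le_ceil _
    have htge : (⌈X / ε⌉₊ : ℝ) ≤ (t : ℝ) := by
      have : ⌈X / ε⌉₊ ≤ t := le_max_right _ _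
      exact_mod_cast this
    have : X / ε ≤ (t : ℝ) := le_trans hceil htge
    have h5 : X ≤ ε * t := by
      rw [div_le_iff₀ hε] at this
      linarith
    nlinarith
  have hbn : (b : ℝ) ≤ ε * n := by
    have hc2 : (b : ℝ) ≤ (k : ℝ) + 4 * k ^ 2 * (s + 1) ^ (k - 1) := by
      have := (Nat.cast_le (α := ℝ)).mpr h2
      push_cast at this
      linarith
    have step : X * ((t : ℝ) + 1) ^ (k - 1) ≤ ε * ((t : ℝ) + 1) ^ k := by
      have hp : ((t : ℝ) + 1) ^ k = ((t : ℝ) + 1) ^ (k - 1) * ((t : ℝ) + 1) := by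
        rw [← pow_succ]
        congr 1
        omega
      rw [hp]
      have hpos : (0 : ℝ) < ((t : ℝ) + 1) ^ (k - 1) := by positivity
      nlinarith
    have hc3 : ((t : ℝ) + 1) ^ k ≤ (n : ℝ) := by
      have := (Nat.cast_le (α := ℝ)).mpr h3
      push_cast at this
      linarith
    have hεn : ε * ((t : ℝ) + 1) ^ k ≤ ε * n := by
      gcongr
    linarith
  have hmn : (1 - ε) * (n : ℝ) ≤ (m : ℝ) := by
    have : (m : ℝ) + b = n := by exact_mod_cast h1
    nlinarith
  have h3k : (0 : ℝ) ≤ (3 : ℝ) ^ k - 1 := by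
    have : (1 : ℝ) ≤ 3 ^ k := by exact_mod_cast Nat.one_le_pow k 3 (by norm_num)
    linarith
  have hE : (m : ℝ) * ((3 : ℝ) ^ k - 1) ≤ 2 * ((Gks k s).edgeSet.ncard : ℝ) := by
    rw [hncard]
    have := (Nat.cast_le (α := ℝ)).mpr h4
    push_cast [Nat.cast_sub (Nat.one_le_pow _ _ (by norm_num) : 1 ≤ 3 ^ k)] at this
    convert this using 2
  have hfinal : (1 - ε) * ((3 : ℝ) ^ k - 1) * (n : ℝ) ≤ (m : ℝ) * ((3 : ℝ) ^ k - 1) := by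
    nlinarith [mul_le_mul_of_nonneg_right hmn h3k]
  linarith


/-- a finite connected `n`-vertex graph of metric dimension at most `k`
has at most `n (3^k - 1) / 2` edges, and for every `ε > 0` some finite connected
graph of metric dimension at most `k` has at least `(1 - ε)(3^k - 1)|V(G)|/2` edges. -/
theorem statement6 (k : ℕ) (hk : 1 ≤ k) :
    (∀ (V : Type) [Fintype V], ∀ G : SimpleGraph V, G.Connected → metricDim G ≤ k →
      2 * G.edgeSet.ncard ≤ Fintype.card V * (3 ^ k - 1)) ∧
    (∀ ε : ℝ, 0 < ε → ∃ (V : Type) (_ : Fintype V) (G : SimpleGraph V),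
      G.Connected ∧ metricDim G ≤ k ∧
      (1 - ε) * ((3 : ℝ) ^ k - 1) * (Fintype.card V : ℝ) / 2 ≤ (G.edgeSet.ncard : ℝ)) := by
  constructor
  · intro V _ G hc hd
    exact part1 k V G hc hd
  · intro ε hε
    exact part2 k hk ε hε
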